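/- For n, h, k ≥ 1, let u(n,h,k) denote the number of strong-Baxter permutations of size n with label (h,k). Then u(1,1,1) = 1 and u(1,h,k) = 0 for (h,k) ≠ (1,1), and for all n ≥ 1 and all h, k ≥ 1: u(n+1, h, k) = Σ_{h' > h} u(n, h', k) + u(n, h, k−1) + [h ≥ 2]·Σ_{k' ≥ k} u(n, h−1, k'), where u(n, ·, 0) is interpreted as 0 and [h ≥ 2] equals 1 if h ≥ 2 and 0 otherwise. (This is the recurrence on label counts encoded by the succession rule Ω_strong of Proposition 5.3, under which the label (h,k) produces the labels (1,k),…,(h−1,k),(h,k+1) and (h+1,1),…,(h+1,k).) -/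

import Mathlib

/-- `f` contains the vincular pattern 2-41-3. -/
def Contains2413 {m : ℕ} (f : Fin m → Fin m) : Prop :=
  ∃ i j j' k : Fin m, (i : ℕ) < (j : ℕ) ∧ (j' : ℕ) = (j : ℕ) + 1 ∧ (j' : ℕ) < (k : ℕ) ∧
    f j' < f i ∧ f i < f k ∧ f k < f j

/-- `f` contains the vincular pattern 3-14-2. -/
def Contains3142 {m : ℕ} (f : Fin m → Fin m) : Prop :=
  ∃ i j j' k : Fin m, (i : ℕ) < (j : ℕ) ∧ (j' : ℕ) = (j : ℕ) + 1 ∧ (j' : ℕ) < (k : ℕ) ∧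
    f j < f k ∧ f k < f i ∧ f i < f j'

/-- `f` contains the vincular pattern 3-41-2. -/
def Contains3412 {m : ℕ} (f : Fin m → Fin m) : Prop :=
  ∃ i j j' k : Fin m, (i : ℕ) < (j : ℕ) ∧ (j' : ℕ) = (j : ℕ) + 1 ∧ (j' : ℕ) < (k : ℕ) ∧
    f j' < f k ∧ f k < f i ∧ f i < f j

/-- A strong-Baxter function avoids all three patterns 2-41-3, 3-14-2 and 3-41-2. -/
def StrongBaxterFun {m : ℕ} (f : Fin m → Fin m) : Prop :=
  ¬ Contains2413 f ∧ ¬ Contains3142 f ∧ ¬ Contains3412 f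

/-- A strong-Baxter permutation avoids all three patterns 2-41-3, 3-14-2 and 3-41-2. -/
def IsStrongBaxter {n : ℕ} (π : Equiv.Perm (Fin n)) : Prop := StrongBaxterFun ⇑π

/-- The local expansion `π · a` on the right of `π` (with 0-indexed values). -/
def insertFun {n : ℕ} (π : Equiv.Perm (Fin n)) (a : Fin (n + 1)) :
    Fin (n + 1) → Fin (n + 1) := fun i =>
  if h : (i : ℕ) < n then
    (if ((π ⟨i, h⟩ : Fin n) : ℕ) < (a : ℕ)
      then ⟨((π ⟨i, h⟩ : Fin n) : ℕ), Nat.lt_succ_of_lt (π ⟨i, h⟩).isLt⟩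
      else ⟨((π ⟨i, h⟩ : Fin n) : ℕ) + 1, Nat.succ_lt_succ (π ⟨i, h⟩).isLt⟩)
  else a

/-- Number of strong-Baxter permutations of size `n` with label `(h, k)`: `h`
(resp. `k`) is the number of active sites weakly below (resp. strictly above)
the last entry. -/
noncomputable def strongBaxterLabelCount (n h k : ℕ) : ℕ :=
  Nat.card {π : Equiv.Perm (Fin n) // IsStrongBaxter π ∧
    ∃ hn : 0 < n,
      h = Nat.card {a : Fin (n + 1) // StrongBaxterFun (insertFun π a) ∧
            (a : ℕ) ≤ ((π ⟨n - 1, Nat.sub_lt hn Nat.one_pos⟩ : Fin n) : ℕ)} ∧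
      k = Nat.card {a : Fin (n + 1) // StrongBaxterFun (insertFun π a) ∧
            ((π ⟨n - 1, Nat.sub_lt hn Nat.one_pos⟩ : Fin n) : ℕ) < (a : ℕ)}}



namespace SBAux

/-- value shift by insertion of `a` -/
def sh (a v : ℕ) : ℕ := if v < a then v else v + 1

/-- value of `π` at (ℕ) position `i` -/
def pv {n : ℕ} (π : Equiv.Perm (Fin n)) (i : ℕ) : ℕ :=
  if h : i < n then ((π ⟨i, h⟩ : Fin n) : ℕ) else 0

/-- `Bad π b` : the gap `b` is not an active site (given π is strong-Baxter). -/
def Bad {n : ℕ} (π : Equiv.Perm (Fin n)) (b : ℕ) : Prop :=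
  ∃ i j : ℕ, i < j ∧ j + 1 < n ∧
    ((pv π (j+1) < pv π i ∧ pv π i < b ∧ b ≤ pv π j) ∨
     (pv π j < b ∧ b ≤ pv π i ∧ pv π i < pv π (j+1)) ∨
     (pv π (j+1) < b ∧ b ≤ pv π i ∧ pv π i < pv π j))

instance {n : ℕ} (π : Equiv.Perm (Fin n)) (b : ℕ) : Decidable (Bad π b) := by
  refine decidable_of_iff (∃ j ∈ Finset.range n, ∃ i ∈ Finset.range j, j + 1 < n ∧
    ((pv π (j+1) < pv π i ∧ pv π i < b ∧ b ≤ pv π j) ∨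
     (pv π j < b ∧ b ≤ pv π i ∧ pv π i < pv π (j+1)) ∨
     (pv π (j+1) < b ∧ b ≤ pv π i ∧ pv π i < pv π j))) ?_
  constructor
  · rintro ⟨j, hj, i, hi, hn, hc⟩
    simp only [Finset.mem_range] at hj hi
    exact ⟨i, j, hi, hn, hc⟩
  · rintro ⟨i, j, hij, hj, hc⟩
    exact ⟨j, Finset.mem_range.2 (by omega), i, Finset.mem_range.2 hij, hj, hc⟩

theorem sh_lt_sh {a u v : ℕ} : sh a u < sh a v ↔ u < v := by
  simp only [sh]; split_ifs <;> omega

theorem sh_lt_a {a v : ℕ} : sh a v < a ↔ v < a := by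
  simp only [sh]; split_ifs <;> omega

theorem a_lt_sh {a v : ℕ} : a < sh a v ↔ a ≤ v := by
  simp only [sh]; split_ifs <;> omega

/-- the gap of `π` corresponding to gap `b` of `π·a` -/
def cg (a b : ℕ) : ℕ := if b ≤ a then b else b - 1

theorem sh_lt_b {a v b : ℕ} : sh a v < b ↔ v < cg a b := by
  simp only [sh, cg]; split_ifs <;> omega

theorem insertFun_val {n : ℕ} (π : Equiv.Perm (Fin n)) (a : Fin (n+1)) (i : Fin (n+1)) :
    ((insertFun π a i : Fin (n+1)) : ℕ) =
      if (i : ℕ) < n then sh (a : ℕ) (pv π (i : ℕ)) else (a : ℕ) := by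
  simp only [insertFun, sh, pv]
  split_ifs <;> simp_all

end SBAux

namespace SBAux

theorem pv_def {n : ℕ} (π : Equiv.Perm (Fin n)) (x : Fin n) :
    ((π x : Fin n) : ℕ) = pv π (x : ℕ) := by
  simp [pv, dif_pos x.isLt]

theorem pv_lt_n {n : ℕ} (π : Equiv.Perm (Fin n)) {i : ℕ} (h : i < n) : pv π i < n := by
  simp only [pv, dif_pos h]; exact (π ⟨i, h⟩).isLt

theorem plt {n : ℕ} (π : Equiv.Perm (Fin n)) {x y : Fin n} :
    π x < π y ↔ pv π (x : ℕ) < pv π (y : ℕ) := by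
  rw [Fin.lt_def, pv_def, pv_def]

theorem fval {n : ℕ} (π : Equiv.Perm (Fin n)) (a : Fin (n+1)) {x : Fin (n+1)}
    (hx : (x : ℕ) < n) : ((insertFun π a x : Fin (n+1)) : ℕ) = sh (a : ℕ) (pv π (x : ℕ)) := by
  rw [insertFun_val]; exact if_pos hx

theorem fval_last {n : ℕ} (π : Equiv.Perm (Fin n)) (a : Fin (n+1)) {x : Fin (n+1)}
    (hx : ¬ (x : ℕ) < n) : ((insertFun π a x : Fin (n+1)) : ℕ) = (a : ℕ) := by
  rw [insertFun_val]; exact if_neg hx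

theorem flt {n : ℕ} (π : Equiv.Perm (Fin n)) (a : Fin (n+1)) {x y : Fin (n+1)}
    (hx : (x : ℕ) < n) (hy : (y : ℕ) < n) :
    insertFun π a x < insertFun π a y ↔ pv π (x : ℕ) < pv π (y : ℕ) := by
  rw [Fin.lt_def, fval π a hx, fval π a hy]; exact sh_lt_sh

theorem flt_last {n : ℕ} (π : Equiv.Perm (Fin n)) (a : Fin (n+1)) {x y : Fin (n+1)}
    (hx : (x : ℕ) < n) (hy : ¬ (y : ℕ) < n) :
    insertFun π a x < insertFun π a y ↔ pv π (x : ℕ) < (a : ℕ) := by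
  rw [Fin.lt_def, fval π a hx, fval_last π a hy]; exact sh_lt_a

theorem flast_lt {n : ℕ} (π : Equiv.Perm (Fin n)) (a : Fin (n+1)) {x y : Fin (n+1)}
    (hx : (x : ℕ) < n) (hy : ¬ (y : ℕ) < n) :
    insertFun π a y < insertFun π a x ↔ (a : ℕ) ≤ pv π (x : ℕ) := by
  rw [Fin.lt_def, fval π a hx, fval_last π a hy]; exact a_lt_sh

/-- The main characterization: the expansion of `π` at gap `a` is strong-Baxter
iff `π` is and `¬ Bad π a`. -/
theorem insert_SB_iff {n : ℕ} (π : Equiv.Perm (Fin n)) (a : Fin (n+1)) :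
    StrongBaxterFun (insertFun π a) ↔ StrongBaxterFun ⇑π ∧ ¬ Bad π (a : ℕ) := by
  constructor
  · rintro ⟨h1, h2, h3⟩
    refine ⟨⟨?_, ?_, ?_⟩, ?_⟩
    · rintro ⟨i, j, j', k, hij, hj', hjk, c1, c2, c3⟩
      rw [plt] at c1 c2 c3
      exact h1 ⟨⟨i, by omega⟩, ⟨j, by omega⟩, ⟨j', by omega⟩, ⟨k, by omega⟩, hij, hj', hjk,
        (flt π a j'.isLt i.isLt).mpr c1,
        (flt π a i.isLt k.isLt).mpr c2, (flt π a k.isLt j.isLt).mpr c3⟩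
    · rintro ⟨i, j, j', k, hij, hj', hjk, c1, c2, c3⟩
      rw [plt] at c1 c2 c3
      exact h2 ⟨⟨i, by omega⟩, ⟨j, by omega⟩, ⟨j', by omega⟩, ⟨k, by omega⟩, hij, hj', hjk,
        (flt π a j.isLt k.isLt).mpr c1, (flt π a k.isLt i.isLt).mpr c2,
        (flt π a i.isLt j'.isLt).mpr c3⟩
    · rintro ⟨i, j, j', k, hij, hj', hjk, c1, c2, c3⟩
      rw [plt] at c1 c2 c3
      exact h3 ⟨⟨i, by omega⟩, ⟨j, by omega⟩, ⟨j', by omega⟩, ⟨k, by omega⟩, hij, hj', hjk,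
        (flt π a j'.isLt k.isLt).mpr c1, (flt π a k.isLt i.isLt).mpr c2,
        (flt π a i.isLt j.isLt).mpr c3⟩
    · rintro ⟨i, j, hij, hjn, hc⟩
      have hin : i < n := by omega
      have hjn' : j < n := by omega
      have hj1 : j + 1 < n := hjn
      set I : Fin (n+1) := ⟨i, by omega⟩
      set J : Fin (n+1) := ⟨j, by omega⟩
      set J' : Fin (n+1) := ⟨j+1, by omega⟩
      set K : Fin (n+1) := ⟨n, by omega⟩
      have hKn : ¬ (K : ℕ) < n := by simp [K]
      rcases hc with ⟨d1, d2, d3⟩ | ⟨d1, d2, d3⟩ | ⟨d1, d2, d3⟩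
      · exact h1 ⟨I, J, J', K, hij, rfl, by simp [J', K]; omega,
          (flt π a (show (J':ℕ) < n from hj1) hin).mpr d1,
          (flt_last π a hin hKn).mpr d2, (flast_lt π a hjn' hKn).mpr d3⟩
      · exact h2 ⟨I, J, J', K, hij, rfl, by simp [J', K]; omega,
          (flt_last π a hjn' hKn).mpr d1, (flast_lt π a hin hKn).mpr d2,
          (flt π a hin (show (J':ℕ) < n from hj1)).mpr d3⟩
      · exact h3 ⟨I, J, J', K, hij, rfl, by simp [J', K]; omega,
          (flt_last π a (show (J':ℕ) < n from hj1) hKn).mpr d1,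
          (flast_lt π a hin hKn).mpr d2, (flt π a hin hjn').mpr d3⟩
  · rintro ⟨⟨h1, h2, h3⟩, hbad⟩
    refine ⟨?_, ?_, ?_⟩ <;> rintro ⟨i, j, j', k, hij, hj', hjk, c1, c2, c3⟩ <;>
      by_cases hk : (k : ℕ) < n
    · have hi : (i:ℕ) < n := by omega
      have hj : (j:ℕ) < n := by omega
      have hjj : (j':ℕ) < n := by omega
      rw [flt π a hjj hi] at c1; rw [flt π a hi hk] at c2; rw [flt π a hk hj] at c3
      exact h1 ⟨⟨i, hi⟩, ⟨j, hj⟩, ⟨j', hjj⟩, ⟨k, hk⟩, hij, hj', hjk,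
        (plt π).mpr c1, (plt π).mpr c2, (plt π).mpr c3⟩
    · have hi : (i:ℕ) < n := by omega
      have hj : (j:ℕ) < n := by omega
      have hjj : (j':ℕ) < n := by omega
      rw [flt π a hjj hi] at c1; rw [flt_last π a hi hk] at c2; rw [flast_lt π a hj hk] at c3
      exact hbad ⟨i, j, hij, by omega, Or.inl ⟨by rwa [hj'] at c1, c2, c3⟩⟩
    · have hi : (i:ℕ) < n := by omega
      have hj : (j:ℕ) < n := by omega
      have hjj : (j':ℕ) < n := by omega
      rw [flt π a hj hk] at c1; rw [flt π a hk hi] at c2; rw [flt π a hi hjj] at c3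
      exact h2 ⟨⟨i, hi⟩, ⟨j, hj⟩, ⟨j', hjj⟩, ⟨k, hk⟩, hij, hj', hjk,
        (plt π).mpr c1, (plt π).mpr c2, (plt π).mpr c3⟩
    · have hi : (i:ℕ) < n := by omega
      have hj : (j:ℕ) < n := by omega
      have hjj : (j':ℕ) < n := by omega
      rw [flt_last π a hj hk] at c1; rw [flast_lt π a hi hk] at c2; rw [flt π a hi hjj] at c3
      exact hbad ⟨i, j, hij, by omega, Or.inr (Or.inl ⟨c1, c2, by rwa [hj'] at c3⟩)⟩
    · have hi : (i:ℕ) < n := by omega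
      have hj : (j:ℕ) < n := by omega
      have hjj : (j':ℕ) < n := by omega
      rw [flt π a hjj hk] at c1; rw [flt π a hk hi] at c2; rw [flt π a hi hj] at c3
      exact h3 ⟨⟨i, hi⟩, ⟨j, hj⟩, ⟨j', hjj⟩, ⟨k, hk⟩, hij, hj', hjk,
        (plt π).mpr c1, (plt π).mpr c2, (plt π).mpr c3⟩
    · have hi : (i:ℕ) < n := by omega
      have hj : (j:ℕ) < n := by omega
      have hjj : (j':ℕ) < n := by omega
      rw [flt_last π a hjj hk] at c1; rw [flast_lt π a hi hk] at c2; rw [flt π a hi hj] at c3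
      exact hbad ⟨i, j, hij, by omega, Or.inr (Or.inr ⟨by rwa [hj'] at c1, c2, c3⟩)⟩

end SBAux

namespace SBAux

theorem b_le_sh {a v b : ℕ} : b ≤ sh a v ↔ cg a b ≤ v := by
  simp only [sh, cg]; split_ifs <;> omega

theorem pv_inj {n : ℕ} (π : Equiv.Perm (Fin n)) {i j : ℕ} (hi : i < n) (hj : j < n)
    (h : pv π i = pv π j) : i = j := by
  simp only [pv, dif_pos hi, dif_pos hj] at h
  have := π.injective (Fin.val_injective h)
  simpa [Fin.mk.injEq] using this

theorem pos_of_val {n : ℕ} (π : Equiv.Perm (Fin n)) (hn : 0 < n) {u : ℕ} (hu : u < n)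
    (hne : u ≠ pv π (n-1)) : ∃ i, i < n - 1 ∧ pv π i = u := by
  refine ⟨(π.symm ⟨u, hu⟩ : Fin n), ?_, ?_⟩
  · have h1 : ((π.symm ⟨u, hu⟩ : Fin n) : ℕ) < n := (π.symm ⟨u, hu⟩).isLt
    rcases Nat.lt_or_ge ((π.symm ⟨u, hu⟩ : Fin n) : ℕ) (n-1) with h | h
    · exact h
    · exfalso
      have he : ((π.symm ⟨u, hu⟩ : Fin n) : ℕ) = n - 1 := by omega
      apply hne
      have : pv π ((π.symm ⟨u, hu⟩ : Fin n) : ℕ) = u := by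
        simp only [pv, dif_pos h1, Fin.eta]
        simp
      rw [← this, he]
  · have h1 : ((π.symm ⟨u, hu⟩ : Fin n) : ℕ) < n := (π.symm ⟨u, hu⟩).isLt
    simp only [pv, dif_pos h1, Fin.eta]
    simp

/-- The gap just below the last value is always active. -/
theorem not_bad_last {n : ℕ} (π : Equiv.Perm (Fin n)) (hπ : StrongBaxterFun ⇑π)
    (hn : 0 < n) : ¬ Bad π (pv π (n-1)) := by
  set p := pv π (n-1) with hp
  rintro ⟨i, j, hij, hjn, hc⟩
  have hi : i < n - 1 := by omega
  have hj : j < n - 1 := by omega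
  have hin : i < n := by omega
  have hjn' : j < n := by omega
  have hj1 : j + 1 < n := hjn
  have hnn : n - 1 < n := by omega
  have hpi : pv π i ≠ p := fun h => by have := pv_inj π hin hnn h; omega
  have hpj : pv π j ≠ p := fun h => by have := pv_inj π hjn' hnn h; omega
  have hpj1 : pv π (j+1) ≠ p := fun h => by have := pv_inj π hj1 hnn h; omega
  have hpv : ∀ {x : ℕ} (hx : x < n), ((π ⟨x, hx⟩ : Fin n) : ℕ) = pv π x := fun hx => by
    simp [pv, dif_pos hx]
  have hppv : ((π ⟨n-1, hnn⟩ : Fin n) : ℕ) = p := hpv hnn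
  rcases hc with ⟨d1, d2, d3⟩ | ⟨d1, d2, d3⟩ | ⟨d1, d2, d3⟩
  · -- A: pv(j+1) < pv i < p ≤ pv j ; j+1 = n-1 impossible
    have hj2 : j + 1 < n - 1 := by
      rcases Nat.lt_or_ge (j+1) (n-1) with h | h
      · exact h
      · exfalso; have : j + 1 = n - 1 := by omega
        rw [this] at d1; omega
    exact hπ.1 ⟨⟨i, hin⟩, ⟨j, hjn'⟩, ⟨j+1, hj1⟩, ⟨n-1, hnn⟩, hij, rfl, hj2,
      by rw [Fin.lt_def, hpv hj1, hpv hin]; exact d1,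
      by rw [Fin.lt_def, hpv hin, hppv]; exact d2,
      by rw [Fin.lt_def, hppv, hpv hjn']; omega⟩
  · -- B: pv j < p ≤ pv i < pv (j+1)
    have hj2 : j + 1 < n - 1 := by
      rcases Nat.lt_or_ge (j+1) (n-1) with h | h
      · exact h
      · exfalso; have : j + 1 = n - 1 := by omega
        rw [this] at d3; omega
    exact hπ.2.1 ⟨⟨i, hin⟩, ⟨j, hjn'⟩, ⟨j+1, hj1⟩, ⟨n-1, hnn⟩, hij, rfl, hj2,
      by rw [Fin.lt_def, hpv hjn', hppv]; exact d1,
      by rw [Fin.lt_def, hppv, hpv hin]; omega,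
      by rw [Fin.lt_def, hpv hin, hpv hj1]; exact d3⟩
  · -- C: pv(j+1) < p ≤ pv i < pv j
    have hj2 : j + 1 < n - 1 := by
      rcases Nat.lt_or_ge (j+1) (n-1) with h | h
      · exact h
      · exfalso; have : j + 1 = n - 1 := by omega
        rw [this] at d1; omega
    exact hπ.2.2 ⟨⟨i, hin⟩, ⟨j, hjn'⟩, ⟨j+1, hj1⟩, ⟨n-1, hnn⟩, hij, rfl, hj2,
      by rw [Fin.lt_def, hpv hj1, hppv]; exact d1,
      by rw [Fin.lt_def, hppv, hpv hin]; omega,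
      by rw [Fin.lt_def, hpv hin, hpv hjn']; exact d3⟩

/-- Transfer of the `Bad` predicate through insertion. -/
theorem bad_insert_iff {n : ℕ} (π : Equiv.Perm (Fin n)) (hn : 0 < n) (a : Fin (n+1))
    (σ : Equiv.Perm (Fin (n+1))) (hσ : ⇑σ = insertFun π a) (b : ℕ) :
    Bad σ b ↔ Bad π (cg (a : ℕ) b) ∨
      ((a : ℕ) < cg (a : ℕ) b ∧ cg (a : ℕ) b ≤ pv π (n-1)) ∨
      (pv π (n-1) < cg (a : ℕ) b ∧ cg (a : ℕ) b < (a : ℕ)) ∨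
      ((a : ℕ) < b ∧ cg (a : ℕ) b < pv π (n-1)) := by
  set p := pv π (n-1) with hp
  set c := cg (a : ℕ) b with hc
  have hpn : p < n := pv_lt_n π (by omega)
  have pvs : ∀ {x : ℕ}, x < n → pv σ x = sh (a : ℕ) (pv π x) := by
    intro x hx
    have hx1 : x < n + 1 := by omega
    simp only [pv, dif_pos hx1, hσ]
    rw [fval π a (show ((⟨x, hx1⟩ : Fin (n+1)) : ℕ) < n from hx)]
    simp [pv, hx]
  have pvn : pv σ n = (a : ℕ) := by
    have hx1 : n < n + 1 := by omega
    simp only [pv, dif_pos hx1, hσ]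
    rw [fval_last π a (show ¬ ((⟨n, hx1⟩ : Fin (n+1)) : ℕ) < n by simp)]
  constructor
  · rintro ⟨i, j, hij, hjn, hcl⟩
    by_cases hj : j + 1 < n
    · left
      have hi : i < n := by omega
      have hjn' : j < n := by omega
      rw [pvs hi, pvs hjn', pvs hj] at hcl
      refine ⟨i, j, hij, hj, ?_⟩
      rcases hcl with ⟨d1, d2, d3⟩ | ⟨d1, d2, d3⟩ | ⟨d1, d2, d3⟩
      · exact Or.inl ⟨sh_lt_sh.mp d1, sh_lt_b.mp d2, b_le_sh.mp d3⟩
      · exact Or.inr (Or.inl ⟨sh_lt_b.mp d1, b_le_sh.mp d2, sh_lt_sh.mp d3⟩)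
      · exact Or.inr (Or.inr ⟨sh_lt_b.mp d1, b_le_sh.mp d2, sh_lt_sh.mp d3⟩)
    · -- j = n - 1  (j+1 = n)
      have hjeq : j + 1 = n := by omega
      have hjn' : j < n := by omega
      have hjp : pv π j = p := by rw [hp]; congr 1; omega
      have hi : i < n := by omega
      rw [pvs hi, pvs hjn', hjp] at hcl
      rw [show j + 1 = n from hjeq, pvn] at hcl
      rcases hcl with ⟨d1, d2, d3⟩ | ⟨d1, d2, d3⟩ | ⟨d1, d2, d3⟩
      · -- A': a < sh a v_i < b ≤ sh a p
        have h1 : (a : ℕ) ≤ pv π i := a_lt_sh.mp d1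
        have h2 : pv π i < c := sh_lt_b.mp d2
        have h3 : c ≤ p := b_le_sh.mp d3
        exact Or.inr (Or.inl ⟨by omega, h3⟩)
      · -- B': sh a p < b ≤ sh a v_i < a
        have h1 : p < c := sh_lt_b.mp d1
        have h2 : c ≤ pv π i := b_le_sh.mp d2
        have h3 : pv π i < (a : ℕ) := sh_lt_a.mp d3
        exact Or.inr (Or.inr (Or.inl ⟨h1, by omega⟩))
      · -- C': a < b ≤ sh a v_i < sh a p
        have h2 : c ≤ pv π i := b_le_sh.mp d2
        have h3 : pv π i < p := sh_lt_sh.mp d3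
        exact Or.inr (Or.inr (Or.inr ⟨d1, by omega⟩))
  · rintro (⟨i, j, hij, hjn, hcl⟩ | ⟨h1, h2⟩ | ⟨h1, h2⟩ | ⟨h1, h2⟩)
    · refine ⟨i, j, hij, by omega, ?_⟩
      have hi : i < n := by omega
      have hjn' : j < n := by omega
      rw [pvs hi, pvs hjn', pvs hjn]
      rcases hcl with ⟨d1, d2, d3⟩ | ⟨d1, d2, d3⟩ | ⟨d1, d2, d3⟩
      · exact Or.inl ⟨sh_lt_sh.mpr d1, sh_lt_b.mpr d2, b_le_sh.mpr d3⟩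
      · exact Or.inr (Or.inl ⟨sh_lt_b.mpr d1, b_le_sh.mpr d2, sh_lt_sh.mpr d3⟩)
      · exact Or.inr (Or.inr ⟨sh_lt_b.mpr d1, b_le_sh.mpr d2, sh_lt_sh.mpr d3⟩)
    · -- a < c ≤ p : use value a at some position < n-1, clause A
      obtain ⟨i, hi, hiv⟩ := pos_of_val π hn (u := (a : ℕ)) (by omega) (by omega)
      refine ⟨i, n - 1, by omega, by omega, Or.inl ?_⟩
      rw [show n - 1 + 1 = n by omega, pvn, pvs (show i < n by omega),
        pvs (show n - 1 < n by omega), hiv, ← hp]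
      exact ⟨a_lt_sh.mpr le_rfl, sh_lt_b.mpr (by omega), b_le_sh.mpr h2⟩
    · -- p < c < a : use value c, clause B
      obtain ⟨i, hi, hiv⟩ := pos_of_val π hn (u := c) (by omega) (by omega)
      refine ⟨i, n - 1, by omega, by omega, Or.inr (Or.inl ?_)⟩
      rw [show n - 1 + 1 = n by omega, pvn, pvs (show i < n by omega),
        pvs (show n - 1 < n by omega), hiv, ← hp]
      exact ⟨sh_lt_b.mpr h1, b_le_sh.mpr le_rfl, sh_lt_a.mpr (by omega)⟩
    · -- a < b, c < p : use value p - 1, clause C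
      obtain ⟨i, hi, hiv⟩ := pos_of_val π hn (u := p - 1) (by omega) (by omega)
      refine ⟨i, n - 1, by omega, by omega, Or.inr (Or.inr ?_)⟩
      rw [show n - 1 + 1 = n by omega, pvn, pvs (show i < n by omega),
        pvs (show n - 1 < n by omega), hiv, ← hp]
      exact ⟨h1, b_le_sh.mpr (by omega), sh_lt_sh.mpr (by omega)⟩

end SBAux

namespace SBAux

instance {m : ℕ} (f : Fin m → Fin m) : Decidable (Contains2413 f) := by
  unfold Contains2413; infer_instance
instance {m : ℕ} (f : Fin m → Fin m) : Decidable (Contains3142 f) := by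
  unfold Contains3142; infer_instance
instance {m : ℕ} (f : Fin m → Fin m) : Decidable (Contains3412 f) := by
  unfold Contains3412; infer_instance
instance {m : ℕ} (f : Fin m → Fin m) : Decidable (StrongBaxterFun f) := by
  unfold StrongBaxterFun; infer_instance
instance {n : ℕ} (π : Equiv.Perm (Fin n)) : Decidable (IsStrongBaxter π) := by
  unfold IsStrongBaxter; infer_instance

/-- active sites (as natural-number gaps) of a strong-Baxter permutation -/
def Act {n : ℕ} (π : Equiv.Perm (Fin n)) : Finset ℕ :=
  (Finset.range (n+1)).filter (fun b => ¬ Bad π b)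

def lastv {n : ℕ} (π : Equiv.Perm (Fin n)) : ℕ := pv π (n-1)

def labH {n : ℕ} (π : Equiv.Perm (Fin n)) : ℕ :=
  ((Act π).filter (fun b => b ≤ lastv π)).card

def labK {n : ℕ} (π : Equiv.Perm (Fin n)) : ℕ :=
  ((Act π).filter (fun b => lastv π < b)).card

def rnk {n : ℕ} (π : Equiv.Perm (Fin n)) (a : ℕ) : ℕ :=
  ((Act π).filter (fun b => b ≤ a)).card

theorem card_fin_filter {N : ℕ} (P : ℕ → Prop) [DecidablePred P] :
    Nat.card {a : Fin N // P (a : ℕ)} = ((Finset.range N).filter P).card := by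
  rw [Nat.card_eq_fintype_card, Fintype.card_subtype]
  refine Finset.card_bij (fun a _ => (a : ℕ)) ?_ ?_ ?_
  · intro a ha
    simp only [Finset.mem_filter, Finset.mem_univ, true_and] at ha
    exact Finset.mem_filter.2 ⟨Finset.mem_range.2 a.isLt, ha⟩
  · intro a _ a' _ h
    exact Fin.val_injective h
  · intro b hb
    simp only [Finset.mem_filter, Finset.mem_range] at hb
    exact ⟨⟨b, hb.1⟩, Finset.mem_filter.2 ⟨Finset.mem_univ _, hb.2⟩, rfl⟩

theorem count_eq {n : ℕ} (hn : 0 < n) (h k : ℕ) :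
    strongBaxterLabelCount n h k =
      ((Finset.univ : Finset (Equiv.Perm (Fin n))).filter
        (fun π => IsStrongBaxter π ∧ labH π = h ∧ labK π = k)).card := by
  classical
  unfold strongBaxterLabelCount
  rw [Nat.card_eq_fintype_card, Fintype.card_subtype]
  congr 1
  refine Finset.filter_congr ?_
  intro π _
  constructor
  · rintro ⟨hsb, hn', hh, hk⟩
    refine ⟨hsb, ?_, ?_⟩
    · rw [hh]
      have : ∀ a : Fin (n+1),
          (StrongBaxterFun (insertFun π a) ∧ (a:ℕ) ≤ ((π ⟨n-1, Nat.sub_lt hn' Nat.one_pos⟩ : Fin n) : ℕ))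
          ↔ (¬ Bad π (a:ℕ) ∧ (a:ℕ) ≤ lastv π) := by
        intro a
        rw [insert_SB_iff, pv_def]
        constructor
        · rintro ⟨⟨-, hb⟩, hle⟩; exact ⟨hb, hle⟩
        · rintro ⟨hb, hle⟩; exact ⟨⟨hsb, hb⟩, hle⟩
      rw [Nat.card_congr (Equiv.subtypeEquivRight this),
        card_fin_filter (fun b => ¬ Bad π b ∧ b ≤ lastv π)]
      unfold labH Act
      rw [Finset.filter_filter]
    · rw [hk]
      have : ∀ a : Fin (n+1),
          (StrongBaxterFun (insertFun π a) ∧ ((π ⟨n-1, Nat.sub_lt hn' Nat.one_pos⟩ : Fin n) : ℕ) < (a:ℕ))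
          ↔ (¬ Bad π (a:ℕ) ∧ lastv π < (a:ℕ)) := by
        intro a
        rw [insert_SB_iff, pv_def]
        constructor
        · rintro ⟨⟨-, hb⟩, hle⟩; exact ⟨hb, hle⟩
        · rintro ⟨hb, hle⟩; exact ⟨⟨hsb, hb⟩, hle⟩
      rw [Nat.card_congr (Equiv.subtypeEquivRight this),
        card_fin_filter (fun b => ¬ Bad π b ∧ lastv π < b)]
      unfold labK Act
      rw [Finset.filter_filter]
  · rintro ⟨hsb, hh, hk⟩
    refine ⟨hsb, hn, ?_, ?_⟩
    · rw [← hh]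
      have : ∀ a : Fin (n+1),
          (StrongBaxterFun (insertFun π a) ∧ (a:ℕ) ≤ ((π ⟨n-1, Nat.sub_lt hn Nat.one_pos⟩ : Fin n) : ℕ))
          ↔ (¬ Bad π (a:ℕ) ∧ (a:ℕ) ≤ lastv π) := by
        intro a
        rw [insert_SB_iff, pv_def]
        constructor
        · rintro ⟨⟨-, hb⟩, hle⟩; exact ⟨hb, hle⟩
        · rintro ⟨hb, hle⟩; exact ⟨⟨hsb, hb⟩, hle⟩
      rw [Nat.card_congr (Equiv.subtypeEquivRight this),
        card_fin_filter (fun b => ¬ Bad π b ∧ b ≤ lastv π)]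
      unfold labH Act
      rw [Finset.filter_filter]
    · rw [← hk]
      have : ∀ a : Fin (n+1),
          (StrongBaxterFun (insertFun π a) ∧ ((π ⟨n-1, Nat.sub_lt hn Nat.one_pos⟩ : Fin n) : ℕ) < (a:ℕ))
          ↔ (¬ Bad π (a:ℕ) ∧ lastv π < (a:ℕ)) := by
        intro a
        rw [insert_SB_iff, pv_def]
        constructor
        · rintro ⟨⟨-, hb⟩, hle⟩; exact ⟨hb, hle⟩
        · rintro ⟨hb, hle⟩; exact ⟨⟨hsb, hb⟩, hle⟩
      rw [Nat.card_congr (Equiv.subtypeEquivRight this),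
        card_fin_filter (fun b => ¬ Bad π b ∧ lastv π < b)]
      unfold labK Act
      rw [Finset.filter_filter]

end SBAux

namespace SBAux

theorem pv_insert {n : ℕ} (π : Equiv.Perm (Fin n)) (a : Fin (n+1))
    (σ : Equiv.Perm (Fin (n+1))) (hσ : ⇑σ = insertFun π a) {x : ℕ} (hx : x < n) :
    pv σ x = sh (a : ℕ) (pv π x) := by
  have hx1 : x < n + 1 := by omega
  simp only [pv, dif_pos hx1, hσ]
  rw [fval π a (show ((⟨x, hx1⟩ : Fin (n+1)) : ℕ) < n from hx)]
  simp [pv, hx]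

theorem pv_insert_last {n : ℕ} (π : Equiv.Perm (Fin n)) (a : Fin (n+1))
    (σ : Equiv.Perm (Fin (n+1))) (hσ : ⇑σ = insertFun π a) : pv σ n = (a : ℕ) := by
  have hx1 : n < n + 1 := by omega
  simp only [pv, dif_pos hx1, hσ]
  rw [fval_last π a (show ¬ ((⟨n, hx1⟩ : Fin (n+1)) : ℕ) < n by simp)]

theorem lastv_insert {n : ℕ} (π : Equiv.Perm (Fin n)) (a : Fin (n+1))
    (σ : Equiv.Perm (Fin (n+1))) (hσ : ⇑σ = insertFun π a) : lastv σ = (a : ℕ) := by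
  unfold lastv
  rw [show n + 1 - 1 = n from rfl]
  exact pv_insert_last π a σ hσ

theorem mem_Act {n : ℕ} (π : Equiv.Perm (Fin n)) {b : ℕ} :
    b ∈ Act π ↔ b ≤ n ∧ ¬ Bad π b := by
  simp [Act, Finset.mem_filter, Finset.mem_range]

/-- the filtered-count decomposition `|Act| = labH + labK` -/
theorem labH_add_labK {n : ℕ} (π : Equiv.Perm (Fin n)) :
    labH π + labK π = (Act π).card := by
  have h1 := Finset.card_filter_add_card_filter_not (s := Act π)
    (p := fun b => b ≤ lastv π)
  have h2 : (Act π).filter (fun b => ¬ b ≤ lastv π) = (Act π).filter (fun b => lastv π < b) :=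
    Finset.filter_congr (fun b _ => by constructor <;> intro <;> omega)
  rw [h2] at h1
  exact h1

theorem rnk_add {n : ℕ} (π : Equiv.Perm (Fin n)) (a : ℕ) :
    rnk π a + ((Act π).filter (fun b => a < b)).card = (Act π).card := by
  have h1 := Finset.card_filter_add_card_filter_not (s := Act π)
    (p := fun b => b ≤ a)
  have h2 : (Act π).filter (fun b => ¬ b ≤ a) = (Act π).filter (fun b => a < b) :=
    Finset.filter_congr (fun b _ => by constructor <;> intro <;> omega)
  rw [h2] at h1
  exact h1

theorem filter_le_card {n : ℕ} (π : Equiv.Perm (Fin n)) {a : ℕ} (ha : a ∈ Act π) :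
    ((Act π).filter (fun b => a ≤ b)).card
      = ((Act π).filter (fun b => a < b)).card + 1 := by
  have : (Act π).filter (fun b => a ≤ b)
      = insert a ((Act π).filter (fun b => a < b)) := by
    ext b
    simp only [Finset.mem_filter, Finset.mem_insert]
    constructor
    · rintro ⟨hb, hab⟩
      rcases Nat.eq_or_lt_of_le hab with rfl | hlt
      · exact Or.inl rfl
      · exact Or.inr ⟨hb, hlt⟩
    · rintro (rfl | ⟨hb, hlt⟩)
      · exact ⟨ha, le_rfl⟩
      · exact ⟨hb, le_of_lt hlt⟩
  rw [this, Finset.card_insert_of_notMem (by simp)]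

/-- `labH` of the expansion `σ = π·a`. -/
theorem labH_insert {n : ℕ} (π : Equiv.Perm (Fin n)) (hn : 0 < n)
    (hπ : StrongBaxterFun ⇑π) (a : Fin (n+1)) (ha : ¬ Bad π (a : ℕ))
    (σ : Equiv.Perm (Fin (n+1))) (hσ : ⇑σ = insertFun π a) :
    labH σ = if (a : ℕ) ≤ lastv π then rnk π (a : ℕ) else labH π + 1 := by
  have hlp : lastv π = pv π (n-1) := rfl
  have hpn : pv π (n-1) < n := pv_lt_n π (by omega)
  have haA : (a : ℕ) ∈ Act π := mem_Act π |>.2 ⟨by omega, ha⟩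
  have key : ∀ b : ℕ, b ≤ (a : ℕ) →
      (¬ Bad σ b ↔ ¬ Bad π b ∧ ¬(pv π (n-1) < b ∧ b < (a:ℕ))) := by
    intro b hba
    rw [bad_insert_iff π hn a σ hσ b]
    have hcg : cg (a : ℕ) b = b := by unfold cg; rw [if_pos hba]
    rw [hcg]
    constructor
    · intro hh
      exact ⟨fun hb => hh (Or.inl hb),
        fun hx => hh (Or.inr (Or.inr (Or.inl ⟨hx.1, hx.2⟩)))⟩
    · rintro ⟨h1, h2⟩
      rintro (hb | ⟨u1, u2⟩ | ⟨u1, u2⟩ | ⟨u1, u2⟩)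
      · exact h1 hb
      · omega
      · exact h2 ⟨u1, u2⟩
      · omega
  have e1 : (Act σ).filter (fun b => b ≤ lastv σ)
      = (Act π).filter (fun b => b ≤ (a:ℕ) ∧ ¬(pv π (n-1) < b ∧ b < (a:ℕ))) := by
    ext b
    rw [lastv_insert π a σ hσ]
    simp only [Finset.mem_filter, mem_Act]
    constructor
    · rintro ⟨⟨hr, hnb⟩, hba⟩
      have := (key b hba).1 hnb
      exact ⟨⟨by omega, this.1⟩, hba, this.2⟩
    · rintro ⟨⟨hr, hnb⟩, hba, hx⟩
      exact ⟨⟨by omega, (key b hba).2 ⟨hnb, hx⟩⟩, hba⟩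
  unfold labH
  rw [e1]
  by_cases hap : (a : ℕ) ≤ lastv π
  · rw [if_pos hap]
    have : (Act π).filter (fun b => b ≤ (a:ℕ) ∧ ¬(pv π (n-1) < b ∧ b < (a:ℕ)))
        = (Act π).filter (fun b => b ≤ (a:ℕ)) :=
      Finset.filter_congr (fun b _ => by
        constructor
        · rintro ⟨h1, -⟩; exact h1
        · intro h1; exact ⟨h1, by omega⟩)
    rw [this]
    rfl
  · rw [if_neg hap]
    have : (Act π).filter (fun b => b ≤ (a:ℕ) ∧ ¬(pv π (n-1) < b ∧ b < (a:ℕ)))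
        = insert (a:ℕ) ((Act π).filter (fun b => b ≤ lastv π)) := by
      ext b
      simp only [Finset.mem_filter, Finset.mem_insert]
      constructor
      · rintro ⟨hb, h1, h2⟩
        by_cases hbe : b = (a:ℕ)
        · exact Or.inl hbe
        · exact Or.inr ⟨hb, by omega⟩
      · rintro (rfl | ⟨hb, hbp⟩)
        · exact ⟨haA, le_rfl, by omega⟩
        · exact ⟨hb, by omega, by omega⟩
    rw [this, Finset.card_insert_of_notMem (by simp only [Finset.mem_filter]; omega)]

/-- `labK` of the expansion `σ = π·a`. -/
theorem labK_insert {n : ℕ} (π : Equiv.Perm (Fin n)) (hn : 0 < n)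
    (hπ : StrongBaxterFun ⇑π) (a : Fin (n+1)) (ha : ¬ Bad π (a : ℕ))
    (σ : Equiv.Perm (Fin (n+1))) (hσ : ⇑σ = insertFun π a) :
    labK σ = if (a : ℕ) < lastv π then labK π
      else if (a : ℕ) = lastv π then labK π + 1
      else labH π + labK π + 1 - rnk π (a : ℕ) := by
  have hlp : lastv π = pv π (n-1) := rfl
  have hpn : pv π (n-1) < n := pv_lt_n π (by omega)
  have haA : (a : ℕ) ∈ Act π := mem_Act π |>.2 ⟨by omega, ha⟩
  have hpA : pv π (n-1) ∈ Act π := mem_Act π |>.2 ⟨by omega, not_bad_last π hπ hn⟩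
  have key : ∀ b : ℕ, (a : ℕ) < b →
      (¬ Bad σ b ↔ ¬ Bad π (b-1) ∧ ¬((a:ℕ) < b-1 ∧ b-1 ≤ pv π (n-1)) ∧ pv π (n-1) ≤ b-1) := by
    intro b hba
    rw [bad_insert_iff π hn a σ hσ b]
    have hcg : cg (a : ℕ) b = b - 1 := by unfold cg; rw [if_neg (by omega)]
    rw [hcg]
    constructor
    · intro hh
      refine ⟨fun hb => hh (Or.inl hb), fun hx => hh (Or.inr (Or.inl hx)), ?_⟩
      by_contra hc
      exact hh (Or.inr (Or.inr (Or.inr ⟨hba, by omega⟩)))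
    · rintro ⟨h1, h2, h3⟩
      rintro (hb | ⟨u1, u2⟩ | ⟨u1, u2⟩ | ⟨u1, u2⟩)
      · exact h1 hb
      · exact h2 ⟨u1, u2⟩
      · omega
      · omega
  have e1 : ((Act σ).filter (fun b => lastv σ < b)).card
      = ((Act π).filter (fun c => (a:ℕ) ≤ c ∧ ¬((a:ℕ) < c ∧ c ≤ pv π (n-1)) ∧
          pv π (n-1) ≤ c)).card := by
    rw [lastv_insert π a σ hσ]
    refine Finset.card_nbij' (fun b => b - 1) (fun c => c + 1) ?_ ?_ ?_ ?_
    · intro b hb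
      simp only [Finset.mem_coe, Finset.mem_filter, mem_Act] at hb ⊢
      obtain ⟨⟨hr, hnb⟩, hab⟩ := hb
      have := (key b hab).1 hnb
      exact ⟨⟨by omega, this.1⟩, by omega, this.2.1, this.2.2⟩
    · intro c hc
      simp only [Finset.mem_coe, Finset.mem_filter, mem_Act] at hc ⊢
      obtain ⟨⟨hr, hnb⟩, hac, hx, hpc⟩ := hc
      refine ⟨⟨by omega, ?_⟩, by omega⟩
      rw [key (c+1) (by omega)]
      simp only [Nat.add_sub_cancel]
      exact ⟨hnb, hx, hpc⟩
    · intro b hb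
      simp only [Finset.mem_coe, Finset.mem_filter, mem_Act] at hb
      dsimp only
      omega
    · intro c hc
      simp only [Finset.mem_coe, Finset.mem_filter, mem_Act] at hc
      dsimp only
      omega
  unfold labK
  rw [e1]
  by_cases h1 : (a:ℕ) < lastv π
  · rw [if_pos h1]
    have : (Act π).filter (fun c => (a:ℕ) ≤ c ∧ ¬((a:ℕ) < c ∧ c ≤ pv π (n-1)) ∧
          pv π (n-1) ≤ c)
        = (Act π).filter (fun c => lastv π < c) :=
      Finset.filter_congr (fun c _ => by
        constructor
        · rintro ⟨u1, u2, u3⟩; omega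
        · intro u; exact ⟨by omega, by omega, by omega⟩)
    rw [this]
  · by_cases h2 : (a:ℕ) = lastv π
    · rw [if_neg (by omega), if_pos h2]
      have : (Act π).filter (fun c => (a:ℕ) ≤ c ∧ ¬((a:ℕ) < c ∧ c ≤ pv π (n-1)) ∧
            pv π (n-1) ≤ c)
          = (Act π).filter (fun c => pv π (n-1) ≤ c) :=
        Finset.filter_congr (fun c _ => by
          constructor
          · rintro ⟨u1, u2, u3⟩; exact u3
          · intro u; exact ⟨by omega, by omega, u⟩)
      rw [this, filter_le_card π hpA]
      congr 1
    · rw [if_neg (by omega), if_neg h2]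
      have : (Act π).filter (fun c => (a:ℕ) ≤ c ∧ ¬((a:ℕ) < c ∧ c ≤ pv π (n-1)) ∧
            pv π (n-1) ≤ c)
          = (Act π).filter (fun c => (a:ℕ) ≤ c) :=
        Finset.filter_congr (fun c _ => by
          constructor
          · rintro ⟨u1, u2, u3⟩; exact u1
          · intro u; exact ⟨u, by omega, by omega⟩)
      rw [this, filter_le_card π haA]
      have hr := rnk_add π (a : ℕ)
      have hhk := labH_add_labK π
      have hrle : 1 ≤ rnk π (a:ℕ) := by
        have hm : (a:ℕ) ∈ (Act π).filter (fun b => b ≤ (a:ℕ)) :=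
          Finset.mem_filter.2 ⟨haA, le_rfl⟩
        exact Finset.card_pos.2 ⟨_, hm⟩
      unfold labK at *
      omega

end SBAux

namespace SBAux

theorem sh_inj {a u v : ℕ} (h : sh a u = sh a v) : u = v := by
  simp only [sh] at h; split_ifs at h <;> omega

theorem sh_ne {a v : ℕ} : sh a v ≠ a := by
  simp only [sh]; split_ifs <;> omega

theorem insertFun_inj {n : ℕ} (π : Equiv.Perm (Fin n)) (a : Fin (n+1)) :
    Function.Injective (insertFun π a) := by
  intro x y h
  have hv := congrArg Fin.val h
  rw [insertFun_val, insertFun_val] at hv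
  by_cases hx : (x : ℕ) < n <;> by_cases hy : (y : ℕ) < n
  · rw [if_pos hx, if_pos hy] at hv
    exact Fin.val_injective (pv_inj π hx hy (sh_inj hv))
  · rw [if_pos hx, if_neg hy] at hv
    exact absurd hv sh_ne
  · rw [if_neg hx, if_pos hy] at hv
    exact absurd hv.symm sh_ne
  · have hx' := x.isLt
    have hy' := y.isLt
    exact Fin.val_injective (by omega)

/-- the permutation `π · a` -/
noncomputable def toPerm {n : ℕ} (π : Equiv.Perm (Fin n)) (a : Fin (n+1)) :
    Equiv.Perm (Fin (n+1)) :=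
  Equiv.ofBijective _ (Finite.injective_iff_bijective.mp (insertFun_inj π a))

theorem toPerm_coe {n : ℕ} (π : Equiv.Perm (Fin n)) (a : Fin (n+1)) :
    ⇑(toPerm π a) = insertFun π a := rfl

theorem insert_eq_inj {n : ℕ} (π π' : Equiv.Perm (Fin n)) (a : Fin (n+1))
    (h : insertFun π a = insertFun π' a) : π = π' := by
  refine Equiv.ext fun x => Fin.val_injective ?_
  have hv := congrArg Fin.val (congrFun h ⟨(x : ℕ), by omega⟩)
  rw [insertFun_val, insertFun_val] at hv
  rw [if_pos (show ((⟨(x:ℕ), by omega⟩ : Fin (n+1)) : ℕ) < n from x.isLt),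
    if_pos (show ((⟨(x:ℕ), by omega⟩ : Fin (n+1)) : ℕ) < n from x.isLt)] at hv
  have := sh_inj hv
  simp only [pv, dif_pos x.isLt, Fin.eta] at this
  exact this

theorem exists_del {n : ℕ} (σ : Equiv.Perm (Fin (n+1))) :
    ∃ π : Equiv.Perm (Fin n), ⇑σ = insertFun π (σ ⟨n, by omega⟩) := by
  classical
  set aN := ((σ ⟨n, by omega⟩ : Fin (n+1)) : ℕ) with haN
  have hσne : ∀ x : Fin n, ((σ ⟨(x:ℕ), by omega⟩ : Fin (n+1)) : ℕ) ≠ aN := by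
    intro x h
    have h2 := σ.injective (Fin.val_injective h)
    have h3 := congrArg Fin.val h2
    simp only at h3
    omega
  have hglt : ∀ x : Fin n,
      (if ((σ ⟨(x:ℕ), by omega⟩ : Fin (n+1)) : ℕ) < aN
        then ((σ ⟨(x:ℕ), by omega⟩ : Fin (n+1)) : ℕ)
        else ((σ ⟨(x:ℕ), by omega⟩ : Fin (n+1)) : ℕ) - 1) < n := by
    intro x
    have h1 : ((σ ⟨(x:ℕ), by omega⟩ : Fin (n+1)) : ℕ) < n + 1 := (σ _).isLt
    have h2 : aN < n + 1 := (σ _).isLt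
    have := hσne x
    split_ifs <;> omega
  set g : Fin n → Fin n := fun x =>
    ⟨if ((σ ⟨(x:ℕ), by omega⟩ : Fin (n+1)) : ℕ) < aN
      then ((σ ⟨(x:ℕ), by omega⟩ : Fin (n+1)) : ℕ)
      else ((σ ⟨(x:ℕ), by omega⟩ : Fin (n+1)) : ℕ) - 1, hglt x⟩ with hg
  have hginj : Function.Injective g := by
    intro x y h
    have hv := congrArg Fin.val h
    simp only [hg] at hv
    have hx := hσne x
    have hy := hσne y
    have hxy : ((σ ⟨(x:ℕ), by omega⟩ : Fin (n+1)) : ℕ) = ((σ ⟨(y:ℕ), by omega⟩ : Fin (n+1)) : ℕ) := by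
      split_ifs at hv <;> omega
    have := σ.injective (Fin.val_injective hxy)
    have h3 := congrArg Fin.val this
    simp only at h3
    exact Fin.val_injective h3
  refine ⟨Equiv.ofBijective g (Finite.injective_iff_bijective.mp hginj), ?_⟩
  funext i
  refine Fin.val_injective ?_
  rw [insertFun_val]
  by_cases hi : (i : ℕ) < n
  · rw [if_pos hi]
    have hpv : pv (Equiv.ofBijective g (Finite.injective_iff_bijective.mp hginj)) (i : ℕ)
        = (g ⟨(i:ℕ), hi⟩ : ℕ) := by
      simp [pv, dif_pos hi, Equiv.ofBijective]
    rw [hpv]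
    simp only [hg, sh]
    have hne := hσne ⟨(i:ℕ), hi⟩
    have hlt : ((σ ⟨(i:ℕ), by omega⟩ : Fin (n+1)) : ℕ) < n + 1 := (σ _).isLt
    have hie : (⟨(i:ℕ), by omega⟩ : Fin (n+1)) = i := Fin.val_injective rfl
    rw [hie] at hne hlt ⊢
    split_ifs <;> omega
  · rw [if_neg hi]
    have hi' : (i : ℕ) = n := by have := i.isLt; omega
    have hie : (⟨n, by omega⟩ : Fin (n+1)) = i := Fin.val_injective (by simp [hi'])
    rw [hie]

end SBAux

namespace SBAux

/-- label of the child obtained by inserting at active site `a` -/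
def labF {n : ℕ} (π : Equiv.Perm (Fin n)) (a : ℕ) : ℕ × ℕ :=
  (if a ≤ lastv π then rnk π a else labH π + 1,
   if a < lastv π then labK π
     else if a = lastv π then labK π + 1
     else labH π + labK π + 1 - rnk π a)

theorem rnk_mono {n : ℕ} (π : Equiv.Perm (Fin n)) {a a' : ℕ} (ha : a ∈ Act π)
    (ha' : a' ∈ Act π) (h : a < a') : rnk π a < rnk π a' := by
  refine Finset.card_lt_card ?_
  constructor
  · intro x hx
    simp only [Finset.mem_filter] at hx ⊢
    exact ⟨hx.1, by omega⟩
  · intro hsub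
    have : a' ∈ (Act π).filter (fun b => b ≤ a') := Finset.mem_filter.2 ⟨ha', le_rfl⟩
    have h2 := hsub this
    simp only [Finset.mem_filter] at h2
    omega

theorem rnk_pos {n : ℕ} (π : Equiv.Perm (Fin n)) {a : ℕ} (ha : a ∈ Act π) :
    1 ≤ rnk π a :=
  Finset.card_pos.2 ⟨a, Finset.mem_filter.2 ⟨ha, le_rfl⟩⟩

theorem rnk_le_card {n : ℕ} (π : Equiv.Perm (Fin n)) (a : ℕ) :
    rnk π a ≤ (Act π).card :=
  Finset.card_le_card (Finset.filter_subset _ _)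

theorem rnk_lastv {n : ℕ} (π : Equiv.Perm (Fin n)) : rnk π (lastv π) = labH π := rfl

theorem rnk_image {n : ℕ} (π : Equiv.Perm (Fin n)) :
    (Act π).image (rnk π) = Finset.Icc 1 (Act π).card := by
  have hinj : Set.InjOn (rnk π) (Act π) := by
    intro x hx y hy hxy
    rcases Nat.lt_trichotomy x y with h | h | h
    · exact absurd hxy (by have := rnk_mono π hx hy h; omega)
    · exact h
    · exact absurd hxy (by have := rnk_mono π hy hx h; omega)
  refine Finset.eq_of_subset_of_card_le ?_ ?_
  · intro r hr
    simp only [Finset.mem_image] at hr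
    obtain ⟨a, ha, rfl⟩ := hr
    exact Finset.mem_Icc.2 ⟨rnk_pos π ha, rnk_le_card π a⟩
  · rw [Finset.card_image_of_injOn hinj, Nat.card_Icc]
    omega

theorem rnk_surj {n : ℕ} (π : Equiv.Perm (Fin n)) {r : ℕ} (h1 : 1 ≤ r)
    (h2 : r ≤ (Act π).card) : ∃ a ∈ Act π, rnk π a = r := by
  have : r ∈ (Act π).image (rnk π) := by
    rw [rnk_image π]
    exact Finset.mem_Icc.2 ⟨h1, h2⟩
  simpa using this

theorem fibre_card {n : ℕ} (π : Equiv.Perm (Fin n)) {r : ℕ} (h1 : 1 ≤ r)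
    (h2 : r ≤ (Act π).card) :
    ((Act π).filter (fun a => rnk π a = r)).card = 1 := by
  obtain ⟨a0, ha0, hr0⟩ := rnk_surj π h1 h2
  rw [Finset.card_eq_one]
  refine ⟨a0, ?_⟩
  ext x
  simp only [Finset.mem_filter, Finset.mem_singleton]
  constructor
  · rintro ⟨hx, hrx⟩
    rcases Nat.lt_trichotomy x a0 with h | h | h
    · have := rnk_mono π hx ha0 h; omega
    · exact h
    · have := rnk_mono π ha0 hx h; omega
  · rintro rfl
    exact ⟨ha0, hr0⟩

/-- per-permutation count of active sites whose child has label `(h,k)` -/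
theorem per_perm_count {n : ℕ} (π : Equiv.Perm (Fin n)) (hn : 0 < n)
    (hπ : StrongBaxterFun ⇑π) (h k : ℕ) (hh : 1 ≤ h) :
    ((Finset.range (n+1)).filter (fun a => ¬ Bad π a ∧ labF π a = (h, k))).card =
      (if h < labH π ∧ k = labK π then 1 else 0) +
      (if h = labH π ∧ k = labK π + 1 then 1 else 0) +
      (if h = labH π + 1 ∧ 1 ≤ k ∧ k ≤ labK π then 1 else 0) := by
  classical
  have hpn : pv π (n-1) < n := pv_lt_n π (by omega)
  have hlp : lastv π = pv π (n-1) := rfl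
  have hpA : lastv π ∈ Act π := mem_Act π |>.2 ⟨by omega, not_bad_last π hπ hn⟩
  have hHK : labH π + labK π = (Act π).card := labH_add_labK π
  have hrp : rnk π (lastv π) = labH π := rfl
  have hS : (Finset.range (n+1)).filter (fun a => ¬ Bad π a ∧ labF π a = (h, k))
      = (Act π).filter (fun a => labF π a = (h, k)) := by
    ext a
    simp only [Finset.mem_filter, mem_Act, Finset.mem_range]
    constructor
    · rintro ⟨h1, h2, h3⟩; exact ⟨⟨by omega, h2⟩, h3⟩
    · rintro ⟨⟨h1, h2⟩, h3⟩; exact ⟨by omega, h2, h3⟩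
  rw [hS]
  set S := (Act π).filter (fun a => labF π a = (h, k)) with hSdef
  have hsplit : S.card = (S.filter (fun a => a < lastv π)).card
      + (S.filter (fun a => a = lastv π)).card
      + (S.filter (fun a => lastv π < a)).card := by
    have t1 := Finset.card_filter_add_card_filter_not (s := S)
      (p := fun a => a < lastv π)
    have t2 := Finset.card_filter_add_card_filter_not
      (s := S.filter (fun a => ¬ a < lastv π)) (p := fun a => a = lastv π)
    have e2 : (S.filter (fun a => ¬ a < lastv π)).filter (fun a => a = lastv π)
        = S.filter (fun a => a = lastv π) := by
      rw [Finset.filter_filter]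
      exact Finset.filter_congr (fun a _ => by
        constructor
        · rintro ⟨h1, h2⟩; exact h2
        · intro h1; exact ⟨by omega, h1⟩)
    have e3 : (S.filter (fun a => ¬ a < lastv π)).filter (fun a => ¬ a = lastv π)
        = S.filter (fun a => lastv π < a) := by
      rw [Finset.filter_filter]
      exact Finset.filter_congr (fun a _ => by
        constructor
        · rintro ⟨h1, h2⟩; omega
        · intro h1; omega)
    rw [e2, e3] at t2
    omega
  rw [hsplit]
  congr 1
  congr 1
  -- part 1 : a < lastv
  · have e : S.filter (fun a => a < lastv π)
        = (Act π).filter (fun a => (rnk π a = h ∧ labK π = k) ∧ a < lastv π) := by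
      rw [hSdef, Finset.filter_filter]
      refine Finset.filter_congr (fun a ha => ?_)
      constructor
      · rintro ⟨h1, h2⟩
        refine ⟨?_, h2⟩
        simp only [labF, if_pos (le_of_lt h2), if_pos h2, Prod.mk.injEq] at h1
        exact h1
      · rintro ⟨h1, h2⟩
        refine ⟨?_, h2⟩
        simp only [labF, if_pos (le_of_lt h2), if_pos h2, Prod.mk.injEq]
        exact h1
    rw [e]
    by_cases hk : labK π = k
    · by_cases hhH : h < labH π
      · rw [if_pos ⟨hhH, hk.symm⟩]
        have e2 : (Act π).filter (fun a => (rnk π a = h ∧ labK π = k) ∧ a < lastv π)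
            = (Act π).filter (fun a => rnk π a = h) := by
          refine Finset.filter_congr (fun a ha => ?_)
          constructor
          · rintro ⟨⟨h1, -⟩, -⟩; exact h1
          · intro h1
            refine ⟨⟨h1, hk⟩, ?_⟩
            rcases Nat.lt_trichotomy a (lastv π) with hlt | heq | hgt
            · exact hlt
            · exfalso; rw [heq] at h1; omega
            · exfalso; have := rnk_mono π hpA ha hgt; omega
        rw [e2]
        exact fibre_card π hh (by omega)
      · rw [if_neg (by tauto)]
        rw [Finset.card_eq_zero, Finset.filter_eq_empty_iff]
        rintro a ha ⟨⟨h1, -⟩, h2⟩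
        have := rnk_mono π ha hpA h2
        omega
    · rw [if_neg (by tauto)]
      rw [Finset.card_eq_zero, Finset.filter_eq_empty_iff]
      rintro a ha ⟨⟨-, h1⟩, -⟩
      exact hk h1
  -- part 2 : a = lastv
  · have e : S.filter (fun a => a = lastv π)
        = (Act π).filter (fun a => (labH π = h ∧ labK π + 1 = k) ∧ a = lastv π) := by
      rw [hSdef, Finset.filter_filter]
      refine Finset.filter_congr (fun a ha => ?_)
      constructor
      · rintro ⟨h1, rfl⟩
        simp only [labF, if_pos (le_refl _), if_neg (lt_irrefl _), if_pos rfl,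
          Prod.mk.injEq, hrp] at h1
        exact ⟨h1, rfl⟩
      · rintro ⟨h1, rfl⟩
        refine ⟨?_, rfl⟩
        simp only [labF, if_pos (le_refl _), if_neg (lt_irrefl _), if_pos rfl,
          Prod.mk.injEq, hrp]
        exact h1
    rw [e]
    by_cases hc : h = labH π ∧ k = labK π + 1
    · rw [if_pos hc]
      rw [Finset.card_eq_one]
      refine ⟨lastv π, ?_⟩
      ext x
      simp only [Finset.mem_filter, Finset.mem_singleton]
      constructor
      · rintro ⟨-, -, h2⟩; exact h2
      · rintro rfl
        exact ⟨hpA, ⟨hc.1.symm, hc.2.symm⟩, rfl⟩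
    · rw [if_neg hc]
      rw [Finset.card_eq_zero, Finset.filter_eq_empty_iff]
      rintro a ha ⟨⟨h1, h2⟩, -⟩
      exact hc ⟨h1.symm, h2.symm⟩
  -- part 3 : a > lastv
  · have e : S.filter (fun a => lastv π < a)
        = (Act π).filter (fun a =>
            (labH π + 1 = h ∧ labH π + labK π + 1 - rnk π a = k) ∧ lastv π < a) := by
      rw [hSdef, Finset.filter_filter]
      refine Finset.filter_congr (fun a ha => ?_)
      constructor
      · rintro ⟨h1, h2⟩
        refine ⟨?_, h2⟩
        simp only [labF, if_neg (by omega : ¬ a ≤ lastv π), if_neg (by omega : ¬ a < lastv π),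
          if_neg (by omega : ¬ a = lastv π), Prod.mk.injEq] at h1
        exact h1
      · rintro ⟨h1, h2⟩
        refine ⟨?_, h2⟩
        simp only [labF, if_neg (by omega : ¬ a ≤ lastv π), if_neg (by omega : ¬ a < lastv π),
          if_neg (by omega : ¬ a = lastv π), Prod.mk.injEq]
        exact h1
    rw [e]
    by_cases hc : h = labH π + 1 ∧ 1 ≤ k ∧ k ≤ labK π
    · rw [if_pos hc]
      obtain ⟨hch, hck1, hck2⟩ := hc
      have e2 : (Act π).filter (fun a =>
            (labH π + 1 = h ∧ labH π + labK π + 1 - rnk π a = k) ∧ lastv π < a)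
          = (Act π).filter (fun a => rnk π a = labH π + labK π + 1 - k) := by
        refine Finset.filter_congr (fun a ha => ?_)
        have hle := rnk_le_card π a
        have hpos := rnk_pos π ha
        constructor
        · rintro ⟨⟨-, h1⟩, h2⟩
          have := rnk_mono π hpA ha h2
          omega
        · intro h1
          have hgt : lastv π < a := by
            rcases Nat.lt_trichotomy (lastv π) a with hlt | heq | hgt
            · exact hlt
            · exfalso; rw [← heq] at h1; rw [hrp] at h1; omega
            · exfalso; have := rnk_mono π ha hpA hgt; omega
          refine ⟨⟨hch.symm, by omega⟩, hgt⟩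
      rw [e2]
      exact fibre_card π (by omega) (by omega)
    · rw [if_neg hc]
      rw [Finset.card_eq_zero, Finset.filter_eq_empty_iff]
      rintro a ha ⟨⟨h1, h2⟩, h3⟩
      have := rnk_mono π hpA ha h3
      have hle := rnk_le_card π a
      apply hc
      refine ⟨h1.symm, by omega, by omega⟩

end SBAux

namespace SBAux

open Finset

noncomputable def delP {n : ℕ} (σ : Equiv.Perm (Fin (n+1))) : Equiv.Perm (Fin n) :=
  (exists_del σ).choose

theorem delP_spec {n : ℕ} (σ : Equiv.Perm (Fin (n+1))) :
    ⇑σ = insertFun (delP σ) (σ ⟨n, by omega⟩) :=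
  (exists_del σ).choose_spec

theorem main_card {n : ℕ} (hn : 0 < n) (h k : ℕ) (hh : 1 ≤ h) :
    ((Finset.univ : Finset (Equiv.Perm (Fin (n+1)))).filter
      (fun σ => IsStrongBaxter σ ∧ labH σ = h ∧ labK σ = k)).card
    = ((Finset.univ : Finset (Equiv.Perm (Fin n))).filter
        (fun π => IsStrongBaxter π ∧ h < labH π ∧ k = labK π)).card
    + ((Finset.univ : Finset (Equiv.Perm (Fin n))).filter
        (fun π => IsStrongBaxter π ∧ h = labH π ∧ k = labK π + 1)).card
    + ((Finset.univ : Finset (Equiv.Perm (Fin n))).filter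
        (fun π => IsStrongBaxter π ∧ h = labH π + 1 ∧ 1 ≤ k ∧ k ≤ labK π)).card := by
  classical
  set P : Finset (Equiv.Perm (Fin n) × ℕ) :=
    (Finset.univ ×ˢ Finset.range (n+1)).filter
      (fun q => IsStrongBaxter q.1 ∧ ¬ Bad q.1 q.2 ∧ labF q.1 q.2 = (h, k)) with hP
  -- Step 1 : bijection with pairs
  have step1 : ((Finset.univ : Finset (Equiv.Perm (Fin (n+1)))).filter
      (fun σ => IsStrongBaxter σ ∧ labH σ = h ∧ labK σ = k)).card = P.card := by
    refine Finset.card_bij (fun σ _ => (delP σ, ((σ ⟨n, by omega⟩ : Fin (n+1)) : ℕ))) ?_ ?_ ?_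
    · intro σ hσ
      simp only [Finset.mem_filter, Finset.mem_univ, true_and] at hσ
      obtain ⟨hsb, hhσ, hkσ⟩ := hσ
      have hspec := delP_spec σ
      have hsb2 : StrongBaxterFun (insertFun (delP σ) (σ ⟨n, by omega⟩)) := by
        rw [← hspec]; exact hsb
      rw [insert_SB_iff] at hsb2
      obtain ⟨hπ, hbad⟩ := hsb2
      simp only [hP, Finset.mem_filter, Finset.mem_product, Finset.mem_univ, true_and,
        Finset.mem_range]
      refine ⟨(σ ⟨n, by omega⟩).isLt, hπ, hbad, ?_⟩
      have e1 := labH_insert (delP σ) hn hπ _ hbad σ hspec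
      have e2 := labK_insert (delP σ) hn hπ _ hbad σ hspec
      rw [hhσ] at e1
      rw [hkσ] at e2
      simp only [labF]
      exact Prod.ext e1.symm e2.symm
    · intro σ hσ σ' hσ' heq
      simp only [Prod.mk.injEq] at heq
      obtain ⟨e1, e2⟩ := heq
      have hs := delP_spec σ
      have hs' := delP_spec σ'
      have ha : (σ ⟨n, by omega⟩ : Fin (n+1)) = (σ' ⟨n, by omega⟩ : Fin (n+1)) :=
        Fin.val_injective e2
      apply Equiv.coe_fn_injective
      show ⇑σ = ⇑σ'
      rw [hs, hs', e1, ha]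
    · intro q hq
      simp only [hP, Finset.mem_filter, Finset.mem_product, Finset.mem_univ, true_and,
        Finset.mem_range] at hq
      obtain ⟨hqa, hπ, hbad, hlab⟩ := hq
      set a : Fin (n+1) := ⟨q.2, hqa⟩ with hadef
      refine ⟨toPerm q.1 a, ?_, ?_⟩
      · simp only [Finset.mem_filter, Finset.mem_univ, true_and]
        have hco : ⇑(toPerm q.1 a) = insertFun q.1 a := toPerm_coe q.1 a
        have hsb : IsStrongBaxter (toPerm q.1 a) := by
          unfold IsStrongBaxter
          rw [hco]
          exact (insert_SB_iff q.1 a).mpr ⟨hπ, hbad⟩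
        refine ⟨hsb, ?_, ?_⟩
        · have := labH_insert q.1 hn hπ a hbad _ hco
          rw [this]
          have : (labF q.1 q.2).1 = h := by rw [hlab]
          simpa [labF] using this
        · have := labK_insert q.1 hn hπ a hbad _ hco
          rw [this]
          have : (labF q.1 q.2).2 = k := by rw [hlab]
          simpa [labF] using this
      · have hco : ⇑(toPerm q.1 a) = insertFun q.1 a := toPerm_coe q.1 a
        have hlastfin : (toPerm q.1 a) ⟨n, by omega⟩ = a := by
          refine Fin.val_injective ?_
          rw [show ((toPerm q.1 a) ⟨n, by omega⟩ : ℕ)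
            = ((insertFun q.1 a ⟨n, by omega⟩ : Fin (n+1)) : ℕ) by rw [hco]]
          rw [fval_last q.1 a (by simp)]
        have hdel : delP (toPerm q.1 a) = q.1 := by
          have hs := delP_spec (toPerm q.1 a)
          rw [hlastfin, hco] at hs
          exact (insert_eq_inj _ _ a hs.symm)
        show (delP (toPerm q.1 a), ((toPerm q.1 a) ⟨n, by omega⟩ : ℕ)) = q
        rw [hdel, hlastfin]
  rw [step1]
  -- Step 2 : fiberwise over the first component
  have step2 : P.card = ∑ π ∈ (Finset.univ : Finset (Equiv.Perm (Fin n))),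
      ((Finset.range (n+1)).filter
        (fun a => IsStrongBaxter π ∧ ¬ Bad π a ∧ labF π a = (h, k))).card := by
    rw [Finset.card_eq_sum_card_fiberwise
      (f := fun q : Equiv.Perm (Fin n) × ℕ => q.1) (t := Finset.univ)
      (fun q _ => Finset.mem_univ _)]
    refine Finset.sum_congr rfl ?_
    intro π _
    refine Finset.card_bij (fun q _ => q.2) ?_ ?_ ?_
    · intro q hq
      simp only [hP, Finset.mem_filter, Finset.mem_product, Finset.mem_univ, true_and,
        Finset.mem_range] at hq ⊢
      obtain ⟨⟨hqa, hrest⟩, hfst⟩ := hq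
      rw [← hfst]
      exact ⟨hqa, hrest⟩
    · intro q hq q' hq' heq
      simp only [hP, Finset.mem_filter] at hq hq'
      have : q.1 = q'.1 := by rw [hq.2, hq'.2]
      exact Prod.ext this heq
    · intro a ha
      simp only [Finset.mem_filter, Finset.mem_range] at ha
      refine ⟨(π, a), ?_, rfl⟩
      simp only [hP, Finset.mem_filter, Finset.mem_product, Finset.mem_univ, true_and,
        Finset.mem_range]
      exact ⟨⟨ha.1, ha.2⟩, trivial⟩
  rw [step2]
  -- Step 3 : evaluate the inner counts
  have step3 : ∀ π : Equiv.Perm (Fin n),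
      ((Finset.range (n+1)).filter
        (fun a => IsStrongBaxter π ∧ ¬ Bad π a ∧ labF π a = (h, k))).card
      = if IsStrongBaxter π then
          ((if h < labH π ∧ k = labK π then 1 else 0) +
           (if h = labH π ∧ k = labK π + 1 then 1 else 0) +
           (if h = labH π + 1 ∧ 1 ≤ k ∧ k ≤ labK π then 1 else 0)) else 0 := by
    intro π
    by_cases hsb : IsStrongBaxter π
    · rw [if_pos hsb, ← per_perm_count π hn hsb h k hh]
      congr 1
      refine Finset.filter_congr (fun a _ => ?_)
      constructor
      · rintro ⟨-, h1, h2⟩; exact ⟨h1, h2⟩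
      · rintro ⟨h1, h2⟩; exact ⟨hsb, h1, h2⟩
    · rw [if_neg hsb]
      rw [Finset.card_eq_zero, Finset.filter_eq_empty_iff]
      rintro a - ⟨hc, -⟩
      exact hsb hc
  rw [Finset.sum_congr rfl (fun π _ => step3 π)]
  rw [← Finset.sum_filter]
  rw [Finset.sum_add_distrib, Finset.sum_add_distrib]
  rw [← Finset.card_filter, ← Finset.card_filter, ← Finset.card_filter]
  rw [Finset.filter_filter, Finset.filter_filter, Finset.filter_filter]

end SBAux

namespace SBAux

theorem act_card_le {n : ℕ} (π : Equiv.Perm (Fin n)) : (Act π).card ≤ n + 1 :=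
  le_trans (Finset.card_filter_le _ _) (by rw [Finset.card_range])

theorem labH_le {n : ℕ} (π : Equiv.Perm (Fin n)) : labH π ≤ n + 1 :=
  le_trans (Finset.card_filter_le _ _) (act_card_le π)

theorem labK_le {n : ℕ} (π : Equiv.Perm (Fin n)) : labK π ≤ n + 1 :=
  le_trans (Finset.card_filter_le _ _) (act_card_le π)

theorem labH_pos {n : ℕ} (π : Equiv.Perm (Fin n)) (hn : 0 < n)
    (hsb : IsStrongBaxter π) : 1 ≤ labH π := by
  have hpn : pv π (n-1) < n := pv_lt_n π (by omega)
  have hpA : lastv π ∈ Act π := mem_Act π |>.2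
    ⟨by have : lastv π = pv π (n-1) := rfl; omega, not_bad_last π hsb hn⟩
  exact Finset.card_pos.2 ⟨lastv π, Finset.mem_filter.2 ⟨hpA, le_rfl⟩⟩

theorem count_zero_largeH {n : ℕ} (hn : 0 < n) {h' k : ℕ} (hbig : n + 2 ≤ h') :
    strongBaxterLabelCount n h' k = 0 := by
  rw [count_eq hn]
  rw [Finset.card_eq_zero, Finset.filter_eq_empty_iff]
  rintro π - ⟨-, hH, -⟩
  have := labH_le π
  omega

theorem count_zero_largeK {n : ℕ} (hn : 0 < n) {h' k : ℕ} (hbig : n + 2 ≤ k) :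
    strongBaxterLabelCount n h' k = 0 := by
  rw [count_eq hn]
  rw [Finset.card_eq_zero, Finset.filter_eq_empty_iff]
  rintro π - ⟨-, -, hK⟩
  have := labK_le π
  omega

theorem termA {n : ℕ} (hn : 0 < n) (h k : ℕ) :
    ((Finset.univ : Finset (Equiv.Perm (Fin n))).filter
        (fun π => IsStrongBaxter π ∧ h < labH π ∧ k = labK π)).card
      = ∑' h' : ℕ, if h < h' then strongBaxterLabelCount n h' k else 0 := by
  classical
  rw [tsum_eq_sum (s := Finset.range (n+2)) (by
    intro h' hh'
    simp only [Finset.mem_range, not_lt] at hh'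
    split_ifs with hc
    · exact count_zero_largeH hn hh'
    · rfl)]
  rw [Finset.card_eq_sum_card_fiberwise (f := fun π => labH π) (t := Finset.range (n+2)) (by
    intro π hπ
    simp only [Finset.mem_coe, Finset.mem_range]
    have := labH_le π
    omega)]
  refine Finset.sum_congr rfl ?_
  intro h' _
  by_cases hc : h < h'
  · rw [if_pos hc, count_eq hn]
    congr 1
    rw [Finset.filter_filter]
    refine Finset.filter_congr (fun π _ => ?_)
    constructor
    · rintro ⟨⟨h1, h2, h3⟩, h4⟩; exact ⟨h1, h4, h3.symm⟩
    · rintro ⟨h1, h2, h3⟩; exact ⟨⟨h1, by omega, h3.symm⟩, h2⟩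
  · rw [if_neg hc]
    rw [Finset.card_eq_zero, Finset.filter_eq_empty_iff]
    rintro π hmem hcon
    simp only [Finset.mem_filter, Finset.mem_univ, true_and] at hmem
    omega


theorem termB {n : ℕ} (hn : 0 < n) (h k : ℕ) (hk : 1 ≤ k) :
    ((Finset.univ : Finset (Equiv.Perm (Fin n))).filter
        (fun π => IsStrongBaxter π ∧ h = labH π ∧ k = labK π + 1)).card
      = strongBaxterLabelCount n h (k - 1) := by
  rw [count_eq hn]
  refine congrArg Finset.card (Finset.filter_congr (fun π _ => ?_))
  constructor
  · rintro ⟨h1, h2, h3⟩; exact ⟨h1, h2.symm, by omega⟩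
  · rintro ⟨h1, h2, h3⟩; exact ⟨h1, h2.symm, by omega⟩

theorem termC {n : ℕ} (hn : 0 < n) (h k : ℕ) (hh : 1 ≤ h) (hk : 1 ≤ k) :
    ((Finset.univ : Finset (Equiv.Perm (Fin n))).filter
        (fun π => IsStrongBaxter π ∧ h = labH π + 1 ∧ 1 ≤ k ∧ k ≤ labK π)).card
      = if 2 ≤ h then
          ∑' k' : ℕ, (if k ≤ k' then strongBaxterLabelCount n (h - 1) k' else 0)
        else 0 := by
  classical
  by_cases hh2 : 2 ≤ h
  · rw [if_pos hh2]
    rw [tsum_eq_sum (s := Finset.range (n+2)) (by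
      intro k' hk'
      simp only [Finset.mem_range, not_lt] at hk'
      split_ifs with hc
      · exact count_zero_largeK hn hk'
      · rfl)]
    rw [Finset.card_eq_sum_card_fiberwise (f := fun π => labK π) (t := Finset.range (n+2)) (by
      intro π hπ
      simp only [Finset.mem_coe, Finset.mem_range]
      have := labK_le π
      omega)]
    refine Finset.sum_congr rfl ?_
    intro k' _
    by_cases hc : k ≤ k'
    · rw [if_pos hc, count_eq hn]
      congr 1
      rw [Finset.filter_filter]
      refine Finset.filter_congr (fun π _ => ?_)
      constructor
      · rintro ⟨⟨h1, h2, h3, h4⟩, h5⟩; exact ⟨h1, by omega, h5⟩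
      · rintro ⟨h1, h2, h3⟩; exact ⟨⟨h1, by omega, hk, by omega⟩, h3⟩
    · rw [if_neg hc]
      rw [Finset.card_eq_zero, Finset.filter_eq_empty_iff]
      rintro π hmem hcon
      simp only [Finset.mem_filter, Finset.mem_univ, true_and] at hmem
      omega
  · rw [if_neg hh2]
    rw [Finset.card_eq_zero, Finset.filter_eq_empty_iff]
    rintro π - ⟨h1, h2, -⟩
    have := labH_pos π hn h1
    omega

end SBAux

namespace SBAux

theorem perm_one_props (π : Equiv.Perm (Fin 1)) :
    IsStrongBaxter π ∧ labH π = 1 ∧ labK π = 1 := by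
  have hsb : IsStrongBaxter π := by
    refine ⟨?_, ?_, ?_⟩ <;> rintro ⟨i, j, j', k', hij, hj', hjk, -⟩ <;>
      · have hi := i.isLt
        have hj := j.isLt
        omega
  have hAct : Act π = {0, 1} := by
    ext b
    rw [mem_Act]
    simp only [Finset.mem_insert, Finset.mem_singleton]
    constructor
    · rintro ⟨hb, -⟩; omega
    · intro hb
      refine ⟨by omega, ?_⟩
      rintro ⟨i, j, hij, hjn, -⟩
      omega
  have hlast : lastv π = 0 := by
    have : pv π 0 < 1 := pv_lt_n π (by omega)
    have h0 : lastv π = pv π 0 := rfl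
    omega
  refine ⟨hsb, ?_, ?_⟩
  · unfold labH
    rw [hAct, hlast]
    decide
  · unfold labK
    rw [hAct, hlast]
    decide

theorem count_one_one : strongBaxterLabelCount 1 1 1 = 1 := by
  rw [count_eq (by omega)]
  rw [Finset.filter_true_of_mem (fun π _ => perm_one_props π)]
  rw [Finset.card_univ]
  simp [Fintype.card_perm]

theorem count_one_ne (h k : ℕ) (hne : (h, k) ≠ (1, 1)) :
    strongBaxterLabelCount 1 h k = 0 := by
  rw [count_eq (by omega)]
  rw [Finset.card_eq_zero, Finset.filter_eq_empty_iff]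
  rintro π - ⟨-, hH, hK⟩
  obtain ⟨-, h1, h2⟩ := perm_one_props π
  apply hne
  rw [← hH, ← hK, h1, h2]

end SBAux

/-- The recurrence on label counts encoded by the succession rule `Ω_strong`
(Proposition 5.3): the label `(h,k)` produces `(1,k),…,(h−1,k),(h,k+1)` and
`(h+1,1),…,(h+1,k)`. -/
theorem strongBaxter_omega_strong :
    strongBaxterLabelCount 1 1 1 = 1 ∧
    (∀ h k : ℕ, 1 ≤ h → 1 ≤ k → (h, k) ≠ (1, 1) → strongBaxterLabelCount 1 h k = 0) ∧
    (∀ n h k : ℕ, 1 ≤ n → 1 ≤ h → 1 ≤ k →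
      strongBaxterLabelCount (n + 1) h k =
        (∑' h' : ℕ, if h < h' then strongBaxterLabelCount n h' k else 0) +
          strongBaxterLabelCount n h (k - 1) +
          (if 2 ≤ h then ∑' k' : ℕ, (if k ≤ k' then strongBaxterLabelCount n (h - 1) k' else 0)
           else 0)) := by
  refine ⟨SBAux.count_one_one, fun h k _ _ hne => SBAux.count_one_ne h k hne, ?_⟩
  intro n h k hn hh hk
  rw [SBAux.count_eq (by omega : (0:ℕ) < n + 1)]
  rw [SBAux.main_card (by omega : 0 < n) h k hh]
  rw [SBAux.termA (by omega) h k, SBAux.termB (by omega) h k hk,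
    SBAux.termC (by omega) h k hh hk]
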